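/- Let T, T₁, T₂, R be μ-invariant Markov kernels on E and let K* : [0, ∞) → [0, ∞] satisfy K*(0) = 0 and that v ↦ K*(v)/v is nondecreasing on (0, ∞). (i) If T satisfies the K*-WPI, then for every f ∈ L²₀(μ) with 0 < ‖f‖_osc < ∞, K*(‖Rf‖²_μ/‖f‖²_osc) ≤ ℰ_μ(T, Rf)/‖f‖²_osc. (ii) If T₁ and T₂ satisfy the comparison K*-WPI, then for every such f, K*(ℰ_μ(T₁, Rf)/‖f‖²_osc) ≤ ℰ_μ(T₂, Rf)/‖f‖²_osc. -/

import Mathlib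

open MeasureTheory ENNReal

noncomputable section

variable {α : Type*} [MeasurableSpace α]

/-- The oscillation seminorm `‖f‖_osc = ess sup_μ f − ess inf_μ f`, realised (with values in
`[0,∞]`) as the essential supremum of `|f x − f y|` over `μ ⊗ μ`. -/
def oscNorm (μ : Measure α) (f : α → ℝ) : ℝ≥0∞ :=
  essSup (fun p : α × α => ENNReal.ofReal |f p.1 - f p.2|) (μ.prod μ)

/-- The Dirichlet form `ℰ_μ(T, f) = ⟨(I − T)f, f⟩_μ` of an operator `T` on `L²(μ)`. -/
def dirichletForm (μ : Measure α) (T : Lp ℝ 2 μ →L[ℝ] Lp ℝ 2 μ) (f : Lp ℝ 2 μ) : ℝ :=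
  @inner ℝ _ _ (f - T f) f

/-- `T` is the `L²(μ)` operator induced by a `μ`-invariant Markov kernel. -/
def IsMarkovOperator (μ : Measure α) (T : Lp ℝ 2 μ →L[ℝ] Lp ℝ 2 μ) : Prop :=
  ∃ K : α → Measure α, Measurable K ∧ (∀ x, IsProbabilityMeasure (K x)) ∧
    μ.bind K = μ ∧ ∀ f : Lp ℝ 2 μ, ∀ᵐ x ∂μ, T f x = ∫ y, f y ∂(K x)

open ProbabilityTheory

namespace WPIaux

set_option linter.unusedSectionVars false

variable {μ : Measure α} [IsProbabilityMeasure μ]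

/-- squared Lp-norm as a lintegral -/
lemma norm_sq_eq (h : Lp ℝ 2 μ) :
    ‖h‖ ^ 2 = (∫⁻ a, (‖h a‖₊ : ℝ≥0∞) ^ (2 : ℝ) ∂μ).toReal := by
  have h1 : (‖h‖ : ℝ) ^ 2 = @inner ℝ _ _ h h := (real_inner_self_eq_norm_sq h).symm
  rw [h1, L2.inner_def, L2.integral_inner_eq_sq_eLpNorm]
  simp

lemma lintegral_sq_ne_top (h : Lp ℝ 2 μ) :
    ∫⁻ a, (‖h a‖₊ : ℝ≥0∞) ^ (2 : ℝ) ∂μ ≠ ⊤ := by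
  have h_two : (2 : ℝ≥0∞).toReal = 2 := by simp
  refine (lintegral_rpow_enorm_lt_top_of_eLpNorm'_lt_top (f := (h : α → ℝ)) (μ := μ) zero_lt_two ?_).ne
  rw [← h_two, ← eLpNorm_eq_eLpNorm' two_ne_zero ENNReal.ofNat_ne_top]
  exact Lp.eLpNorm_lt_top h

/-- Cauchy-Schwarz for lintegral against a probability measure -/
lemma sq_lintegral_le (ν : Measure α) [IsProbabilityMeasure ν] {h : α → ℝ≥0∞}
    (hm : AEMeasurable h ν) :
    (∫⁻ a, h a ∂ν) ^ (2 : ℝ) ≤ ∫⁻ a, h a ^ (2 : ℝ) ∂ν := by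
  have hpq : Real.HolderConjugate 2 2 := Real.HolderConjugate.two_two
  have h2 := ENNReal.lintegral_mul_le_Lp_mul_Lq ν hpq hm aemeasurable_const
      (g := fun _ => (1:ℝ≥0∞))
  simp only [Pi.mul_apply, mul_one, ENNReal.one_rpow, lintegral_one, measure_univ,
    ENNReal.one_rpow] at h2
  calc (∫⁻ a, h a ∂ν) ^ (2:ℝ) ≤ ((∫⁻ a, h a ^ (2:ℝ) ∂ν) ^ (1/(2:ℝ))) ^ (2:ℝ) :=
        ENNReal.rpow_le_rpow h2 (by norm_num)
    _ = ∫⁻ a, h a ^ (2:ℝ) ∂ν := by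
        rw [← ENNReal.rpow_mul]; norm_num

section AE

/-- lift a.e. statements to the first coordinate of the product -/
lemma ae_fst {Q : α → Prop} (hQ : ∀ᵐ x ∂μ, Q x) : ∀ᵐ p ∂(μ.prod μ), Q p.1 := by
  rw [ae_iff] at hQ ⊢
  have h : {p : α × α | ¬ Q p.1} = {x | ¬ Q x} ×ˢ Set.univ := by ext p; simp
  rw [h, Measure.prod_prod, hQ, zero_mul]

lemma ae_snd {Q : α → Prop} (hQ : ∀ᵐ x ∂μ, Q x) : ∀ᵐ p ∂(μ.prod μ), Q p.2 := by
  rw [ae_iff] at hQ ⊢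
  have h : {p : α × α | ¬ Q p.2} = Set.univ ×ˢ {x | ¬ Q x} := by ext p; simp
  rw [h, Measure.prod_prod, hQ, mul_zero]

end AE

section Markov

variable {S : Lp ℝ 2 μ →L[ℝ] Lp ℝ 2 μ} (hS : IsMarkovOperator μ S)

include hS

/-- Invariance of the integral -/
lemma markov_integral (f : Lp ℝ 2 μ) : ∫ x, (S f) x ∂μ = ∫ x, f x ∂μ := by
  obtain ⟨K, hK, hKP, hbind, hrep⟩ := hS
  haveI : ∀ x, IsProbabilityMeasure (K x) := hKP
  set κ : Kernel α α := ⟨K, hK⟩ with hκ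
  haveI : IsMarkovKernel κ := ⟨hKP⟩
  have hgm : StronglyMeasurable (f : α → ℝ) := Lp.stronglyMeasurable f
  have hmap : μ.bind K = (μ ⊗ₘ κ).map Prod.snd := by
    ext s hs
    rw [Measure.map_apply measurable_snd hs,
      Measure.compProd_apply (measurable_snd hs), Measure.bind_apply hs hK.aemeasurable]
    congr 1
  have hIntf : Integrable (fun y => f y) μ := (Lp.memLp f).integrable (by norm_num)
  have hIntmap : Integrable (fun y => f y) ((μ ⊗ₘ κ).map Prod.snd) := by
    rw [← hmap, hbind]; exact hIntf
  have hInt2 : Integrable (fun p : α × α => f p.2) (μ ⊗ₘ κ) :=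
    (integrable_map_measure hgm.aestronglyMeasurable measurable_snd.aemeasurable).mp hIntmap
  have hSf : Integrable (fun x => (S f) x) μ := (Lp.memLp (S f)).integrable (by norm_num)
  calc ∫ x, (S f) x ∂μ = ∫ x, ∫ y, f y ∂(K x) ∂μ := integral_congr_ae (hrep f)
    _ = ∫ p : α × α, f p.2 ∂(μ ⊗ₘ κ) := (Measure.integral_compProd hInt2).symm
    _ = ∫ y, f y ∂((μ ⊗ₘ κ).map Prod.snd) :=
        (integral_map measurable_snd.aemeasurable hgm.aestronglyMeasurable).symm
    _ = ∫ x, f x ∂μ := by rw [← hmap, hbind]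

/-- L² contraction -/
lemma markov_norm_le (f : Lp ℝ 2 μ) : ‖S f‖ ≤ ‖f‖ := by
  obtain ⟨K, hK, hKP, hbind, hrep⟩ := hS
  haveI : ∀ x, IsProbabilityMeasure (K x) := hKP
  have hgm : StronglyMeasurable (f : α → ℝ) := Lp.stronglyMeasurable f
  have hmeas : Measurable fun y => (‖f y‖₊ : ℝ≥0∞) ^ (2:ℝ) := by
    have h0 : Measurable fun y => (‖f y‖₊ : ℝ≥0∞) := hgm.measurable.enorm
    have he : (fun y => (‖f y‖₊ : ℝ≥0∞) ^ (2:ℝ)) = fun y => (‖f y‖₊ : ℝ≥0∞) ^ (2:ℕ) := by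
      funext y; rw [← ENNReal.rpow_natCast]; norm_num
    rw [he]; exact h0.pow_const 2
  have key : ∫⁻ a, (‖(S f) a‖₊ : ℝ≥0∞) ^ (2:ℝ) ∂μ ≤ ∫⁻ a, (‖f a‖₊ : ℝ≥0∞) ^ (2:ℝ) ∂μ := by
    have hb : ∫⁻ x, ∫⁻ y, (‖f y‖₊ : ℝ≥0∞) ^ (2:ℝ) ∂(K x) ∂μ
        = ∫⁻ a, (‖f a‖₊ : ℝ≥0∞) ^ (2:ℝ) ∂μ := by
      rw [← Measure.lintegral_bind hK.aemeasurable hmeas.aemeasurable, hbind]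
    rw [← hb]
    refine lintegral_mono_ae ?_
    filter_upwards [hrep f] with x hx
    have h1 : (‖(S f) x‖₊ : ℝ≥0∞) ≤ ∫⁻ y, (‖f y‖₊ : ℝ≥0∞) ∂(K x) := by
      rw [hx]; exact enorm_integral_le_lintegral_enorm _
    calc (‖(S f) x‖₊ : ℝ≥0∞) ^ (2:ℝ) ≤ (∫⁻ y, (‖f y‖₊ : ℝ≥0∞) ∂(K x)) ^ (2:ℝ) :=
          ENNReal.rpow_le_rpow h1 (by norm_num)
      _ ≤ ∫⁻ y, (‖f y‖₊ : ℝ≥0∞) ^ (2:ℝ) ∂(K x) :=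
          sq_lintegral_le (K x) hgm.measurable.enorm.aemeasurable
  have h1 : ‖S f‖ ^ 2 ≤ ‖f‖ ^ 2 := by
    rw [norm_sq_eq, norm_sq_eq]
    exact ENNReal.toReal_mono (lintegral_sq_ne_top f) key
  nlinarith [norm_nonneg (S f), norm_nonneg f]

lemma dirichlet_nonneg (f : Lp ℝ 2 μ) : 0 ≤ dirichletForm μ S f := by
  have h1 : dirichletForm μ S f = ‖f‖^2 - @inner ℝ _ _ (S f) f := by
    rw [dirichletForm, inner_sub_left, real_inner_self_eq_norm_sq]
  have h2 : @inner ℝ _ _ (S f) f ≤ ‖f‖^2 := by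
    calc @inner ℝ _ _ (S f) f ≤ ‖S f‖ * ‖f‖ := real_inner_le_norm _ _
      _ ≤ ‖f‖ * ‖f‖ := mul_le_mul_of_nonneg_right (markov_norm_le hS f) (norm_nonneg f)
      _ = ‖f‖^2 := (sq ‖f‖).symm
  linarith


/-- oscillation contraction -/
lemma markov_osc_le (f : Lp ℝ 2 μ) : oscNorm μ (S f) ≤ oscNorm μ f := by
  obtain ⟨K, hK, hKP, hbind, hrep⟩ := hS
  haveI : ∀ x, IsProbabilityMeasure (K x) := hKP
  set M := oscNorm μ (f : α → ℝ) with hMdef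
  by_cases hM : M = ⊤
  · exact hM ▸ le_top
  have hgm : StronglyMeasurable (f : α → ℝ) := Lp.stronglyMeasurable f
  -- the bad set
  set N : Set (α × α) := {q : α × α | M.toReal < |f q.1 - f q.2|} with hNdef
  have hNmeas : MeasurableSet N :=
    measurableSet_lt measurable_const
      ((hgm.measurable.comp measurable_fst).sub (hgm.measurable.comp measurable_snd)).abs
  have hub : ∀ᵐ p ∂(μ.prod μ), |f p.1 - f p.2| ≤ M.toReal := by
    filter_upwards [_root_.ae_le_essSup
      (f := fun p : α × α => ENNReal.ofReal |f p.1 - f p.2|) (μ := μ.prod μ)] with p hp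
    exact (ENNReal.ofReal_le_iff_le_toReal hM).mp hp
  have hN0 : (μ.prod μ) N = 0 := by
    have := ae_iff.mp hub
    simpa [hNdef, not_le] using this
  -- kernels
  set κ : Kernel α α := ⟨K, hK⟩ with hκdef
  haveI : IsMarkovKernel κ := ⟨hKP⟩
  set ρ : Kernel (α × α) (α × α) :=
    (κ.comap Prod.fst measurable_fst) ×ₖ (κ.comap Prod.snd measurable_snd) with hρdef
  have hρ : ∀ p : α × α, ρ p = (K p.1).prod (K p.2) := by
    intro p
    rw [hρdef, Kernel.prod_apply, Kernel.comap_apply, Kernel.comap_apply]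
    rfl
  have hbind2 : (μ.prod μ).bind (fun p => ρ p) = μ.prod μ := by
    refine (Measure.prod_eq fun s t hs ht => ?_).symm
    rw [Measure.bind_apply (hs.prod ht) (Kernel.measurable ρ).aemeasurable]
    have h1 : ∀ p : α × α, ρ p (s ×ˢ t) = K p.1 s * K p.2 t := by
      intro p; rw [hρ p, Measure.prod_prod]
    simp_rw [h1]
    have hms : Measurable fun x => K x s := (Measure.measurable_coe hs).comp hK
    have hmt : Measurable fun x => K x t := (Measure.measurable_coe ht).comp hK
    rw [lintegral_prod_mul hms.aemeasurable hmt.aemeasurable,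
      ← Measure.bind_apply hs hK.aemeasurable, ← Measure.bind_apply ht hK.aemeasurable, hbind]
  have haeN : ∀ᵐ p ∂(μ.prod μ), ρ p N = 0 := by
    have h0 : ∫⁻ p, ρ p N ∂(μ.prod μ) = 0 := by
      rw [← Measure.bind_apply hNmeas (Kernel.measurable ρ).aemeasurable, hbind2, hN0]
    have := (lintegral_eq_zero_iff (Kernel.measurable_coe ρ hNmeas)).mp h0
    filter_upwards [this] with p hp using hp
  -- integrability of f against kernels, a.e.
  have hIntf : Integrable (fun y => f y) μ := (Lp.memLp f).integrable (by norm_num)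
  have hint : ∀ᵐ x ∂μ, Integrable (fun y => f y) (K x) := by
    have hme : Measurable fun y => (‖f y‖₊ : ℝ≥0∞) := hgm.measurable.enorm
    have h1 : ∫⁻ x, ∫⁻ y, (‖f y‖₊ : ℝ≥0∞) ∂(K x) ∂μ = ∫⁻ y, (‖f y‖₊ : ℝ≥0∞) ∂μ := by
      rw [← Measure.lintegral_bind hK.aemeasurable hme.aemeasurable, hbind]
    have h2 : ∫⁻ x, ∫⁻ y, (‖f y‖₊ : ℝ≥0∞) ∂(K x) ∂μ < ⊤ := by
      rw [h1]; exact hIntf.2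
    have h3 : ∀ᵐ x ∂μ, ∫⁻ y, (‖f y‖₊ : ℝ≥0∞) ∂(K x) < ⊤ :=
      ae_lt_top ((Measure.measurable_lintegral hme).comp hK) h2.ne
    filter_upwards [h3] with x hx
    exact ⟨hgm.aestronglyMeasurable, hx⟩
  -- main bound
  refine essSup_le_of_ae_le _ ?_
  have hA : ∀ᵐ x ∂μ, (S f) x = ∫ y, f y ∂(K x) ∧ Integrable (fun y => f y) (K x) :=
    (hrep f).and hint
  filter_upwards [ae_fst hA, ae_snd hA, haeN] with p h1 h2 h3
  set ν := (K p.1).prod (K p.2) with hνdef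
  haveI : IsProbabilityMeasure ν := by rw [hνdef]; infer_instance
  have hb : ∀ᵐ q ∂ν, |f q.1 - f q.2| ≤ M.toReal := by
    rw [ae_iff]
    have : ν N = 0 := by rw [hνdef, ← hρ p]; exact h3
    simpa [hNdef, not_le] using this
  have hmap1 : ν.map Prod.fst = K p.1 := by
    rw [hνdef, Measure.map_fst_prod]; simp
  have hmap2 : ν.map Prod.snd = K p.2 := by
    rw [hνdef, Measure.map_snd_prod]; simp
  have hI1 : Integrable (fun q : α × α => f q.1) ν :=
    (integrable_map_measure hgm.aestronglyMeasurable measurable_fst.aemeasurable).mp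
      (hmap1 ▸ h1.2)
  have hI2 : Integrable (fun q : α × α => f q.2) ν :=
    (integrable_map_measure hgm.aestronglyMeasurable measurable_snd.aemeasurable).mp
      (hmap2 ▸ h2.2)
  have hval : (S f) p.1 - (S f) p.2 = ∫ q : α × α, (f q.1 - f q.2) ∂ν := by
    rw [integral_sub hI1 hI2, h1.1, h2.1, hνdef, integral_fun_fst, integral_fun_snd]
    simp
  have habs : |(S f) p.1 - (S f) p.2| ≤ M.toReal := by
    rw [hval]
    have hC := norm_integral_le_of_norm_le_const (μ := ν)
      (f := fun q : α × α => f q.1 - f q.2) (C := M.toReal) ?_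
    · simpa [measure_univ] using hC
    · filter_upwards [hb] with q hq
      simpa [Real.norm_eq_abs] using hq
  calc ENNReal.ofReal |(S f) p.1 - (S f) p.2| ≤ ENNReal.ofReal M.toReal :=
        ENNReal.ofReal_le_ofReal habs
    _ = M := ENNReal.ofReal_toReal hM


end Markov

/-- zero oscillation and zero mean force the zero element -/
lemma eq_zero_of_osc_zero (g : Lp ℝ 2 μ) (h0 : oscNorm μ g = 0)
    (hmean : ∫ x, g x ∂μ = 0) : g = 0 := by
  have h1 : (fun p : α × α => ENNReal.ofReal |g p.1 - g p.2|) =ᵐ[μ.prod μ] 0 :=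
    essSup_eq_zero_iff.mp h0
  have h2 : ∀ᵐ p ∂(μ.prod μ), g p.1 = g p.2 := by
    filter_upwards [h1] with p hp
    have : |g p.1 - g p.2| ≤ 0 := by
      by_contra hc
      push_neg at hc
      simp only [Pi.zero_apply, ENNReal.ofReal_eq_zero] at hp
      linarith
    have := abs_nonneg (g p.1 - g p.2)
    have : |g p.1 - g p.2| = 0 := le_antisymm ‹_› ‹_›
    have := abs_eq_zero.mp this
    linarith
  have h3 : ∀ᵐ x ∂μ, ∀ᵐ y ∂μ, g x = g y := Measure.ae_ae_of_ae_prod h2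
  haveI : (ae μ).NeBot := IsProbabilityMeasure.ae_neBot
  obtain ⟨x0, hx0⟩ := h3.exists
  have hconst : ∀ᵐ y ∂μ, g y = g x0 := hx0.mono fun y hy => hy.symm
  have hInt : ∫ x, g x ∂μ = g x0 := by
    rw [integral_congr_ae hconst]
    simp
  have hgx0 : g x0 = 0 := by rw [← hInt, hmean]
  have : (g : α → ℝ) =ᵐ[μ] 0 := by
    filter_upwards [hconst] with y hy
    rw [hy, hgx0]; rfl
  exact Lp.eq_zero_iff_ae_eq_zero.mpr this

/-- the arithmetic core -/
lemma key_arith (Ks : ℝ → ℝ≥0∞)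
    (hKsmono : ∀ v w : ℝ, 0 < v → v ≤ w → Ks v / ENNReal.ofReal v ≤ Ks w / ENNReal.ofReal w)
    {n e a b : ℝ} (hn : 0 < n) (ha : 0 < a) (hab : a ≤ b)
    (hw : Ks (n / a ^ 2) ≤ ENNReal.ofReal (e / a ^ 2)) :
    Ks (n / b ^ 2) ≤ ENNReal.ofReal (e / b ^ 2) := by
  have hb : 0 < b := ha.trans_le hab
  have hv : 0 < n / b ^ 2 := by positivity
  have hwpos : 0 < n / a ^ 2 := by positivity
  have hvw : n / b ^ 2 ≤ n / a ^ 2 := by gcongr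
  have hm := hKsmono _ _ hv hvw
  have hvne : ENNReal.ofReal (n / b ^ 2) ≠ 0 := by
    simp [ENNReal.ofReal_eq_zero, not_le, hv]
  have hchain : Ks (n / b ^ 2) ≤
      ENNReal.ofReal ((e / a ^ 2) / (n / a ^ 2)) * ENNReal.ofReal (n / b ^ 2) := by
    calc Ks (n / b ^ 2)
        = Ks (n / b ^ 2) / ENNReal.ofReal (n / b ^ 2) * ENNReal.ofReal (n / b ^ 2) :=
          (ENNReal.div_mul_cancel hvne ENNReal.ofReal_ne_top).symm
      _ ≤ Ks (n / a ^ 2) / ENNReal.ofReal (n / a ^ 2) * ENNReal.ofReal (n / b ^ 2) :=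
          mul_le_mul_left hm _
      _ ≤ ENNReal.ofReal (e / a ^ 2) / ENNReal.ofReal (n / a ^ 2) * ENNReal.ofReal (n / b ^ 2) :=
          mul_le_mul_left (ENNReal.div_le_div_right hw _) _
      _ = ENNReal.ofReal ((e / a ^ 2) / (n / a ^ 2)) * ENNReal.ofReal (n / b ^ 2) := by
          rw [ENNReal.ofReal_div_of_pos hwpos]
  rcases le_or_gt 0 e with he | he
  · have hnn : 0 ≤ (e / a ^ 2) / (n / a ^ 2) := by positivity
    rw [← ENNReal.ofReal_mul hnn] at hchain
    have harith : (e / a ^ 2) / (n / a ^ 2) * (n / b ^ 2) = e / b ^ 2 := by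
      field_simp
    rwa [harith] at hchain
  · have h1 : e / a ^ 2 ≤ 0 := div_nonpos_of_nonpos_of_nonneg he.le (sq_nonneg a)
    have h2 : (e / a ^ 2) / (n / a ^ 2) ≤ 0 :=
      div_nonpos_of_nonpos_of_nonneg h1 hwpos.le
    rw [ENNReal.ofReal_eq_zero.mpr h2, zero_mul, nonpos_iff_eq_zero] at hchain
    rw [hchain]
    exact zero_le

end WPIaux

/-- `S` satisfies the `K*`-WPI. -/
def KstarWPI (μ : Measure α) (Ks : ℝ → ℝ≥0∞) (S : Lp ℝ 2 μ →L[ℝ] Lp ℝ 2 μ) : Prop :=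
  ∀ f : Lp ℝ 2 μ, (∫ x, f x ∂μ) = 0 → 0 < oscNorm μ f → oscNorm μ f < ⊤ →
    Ks (‖f‖ ^ 2 / ((oscNorm μ f).toReal) ^ 2) ≤
      ENNReal.ofReal (dirichletForm μ S f / ((oscNorm μ f).toReal) ^ 2)

/-- `S₁` and `S₂` satisfy the comparison `K*`-WPI. -/
def KstarCompWPI (μ : Measure α) (Ks : ℝ → ℝ≥0∞)
    (S₁ S₂ : Lp ℝ 2 μ →L[ℝ] Lp ℝ 2 μ) : Prop :=
  ∀ f : Lp ℝ 2 μ, (∫ x, f x ∂μ) = 0 → 0 < oscNorm μ f → oscNorm μ f < ⊤ →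
    Ks (dirichletForm μ S₁ f / ((oscNorm μ f).toReal) ^ 2) ≤
      ENNReal.ofReal (dirichletForm μ S₂ f / ((oscNorm μ f).toReal) ^ 2)

theorem stmt1
    (μ : Measure α) [IsProbabilityMeasure μ]
    (T T₁ T₂ R : Lp ℝ 2 μ →L[ℝ] Lp ℝ 2 μ)
    (hT : IsMarkovOperator μ T) (hT₁ : IsMarkovOperator μ T₁)
    (hT₂ : IsMarkovOperator μ T₂) (hR : IsMarkovOperator μ R)
    (Ks : ℝ → ℝ≥0∞) (hKs0 : Ks 0 = 0)
    (hKsmono : ∀ v w : ℝ, 0 < v → v ≤ w → Ks v / ENNReal.ofReal v ≤ Ks w / ENNReal.ofReal w) :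
    (KstarWPI μ Ks T →
      ∀ f : Lp ℝ 2 μ, (∫ x, f x ∂μ) = 0 → 0 < oscNorm μ f → oscNorm μ f < ⊤ →
        Ks (‖R f‖ ^ 2 / ((oscNorm μ f).toReal) ^ 2) ≤
          ENNReal.ofReal (dirichletForm μ T (R f) / ((oscNorm μ f).toReal) ^ 2)) ∧
    (KstarCompWPI μ Ks T₁ T₂ →
      ∀ f : Lp ℝ 2 μ, (∫ x, f x ∂μ) = 0 → 0 < oscNorm μ f → oscNorm μ f < ⊤ →
        Ks (dirichletForm μ T₁ (R f) / ((oscNorm μ f).toReal) ^ 2) ≤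
          ENNReal.ofReal (dirichletForm μ T₂ (R f) / ((oscNorm μ f).toReal) ^ 2)) := by
  constructor
  · intro hWPI f hf0 hpos hlt
    have hint0 : ∫ x, (R f) x ∂μ = 0 := by rw [WPIaux.markov_integral hR f, hf0]
    by_cases hn : ‖R f‖ = 0
    · have hz : ‖R f‖ ^ 2 / ((oscNorm μ f).toReal) ^ 2 = 0 := by rw [hn]; simp
      rw [hz, hKs0]
      exact zero_le
    · have hnpos : 0 < ‖R f‖ ^ 2 := by
        have : 0 < ‖R f‖ := lt_of_le_of_ne (norm_nonneg _) (Ne.symm hn)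
        positivity
      have hoscpos : 0 < oscNorm μ (R f) := by
        rw [pos_iff_ne_zero]
        intro h0
        have hz := WPIaux.eq_zero_of_osc_zero (R f) h0 hint0
        rw [hz] at hn
        simp at hn
      have hosclt : oscNorm μ (R f) < ⊤ := lt_of_le_of_lt (WPIaux.markov_osc_le hR f) hlt
      have hw := hWPI (R f) hint0 hoscpos hosclt
      exact WPIaux.key_arith Ks hKsmono hnpos
        (ENNReal.toReal_pos hoscpos.ne' hosclt.ne)
        (ENNReal.toReal_mono hlt.ne (WPIaux.markov_osc_le hR f)) hw
  · intro hComp f hf0 hpos hlt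
    have hint0 : ∫ x, (R f) x ∂μ = 0 := by rw [WPIaux.markov_integral hR f, hf0]
    by_cases hn : dirichletForm μ T₁ (R f) = 0
    · rw [hn, zero_div, hKs0]
      exact zero_le
    · have hnpos : 0 < dirichletForm μ T₁ (R f) :=
        lt_of_le_of_ne (WPIaux.dirichlet_nonneg hT₁ (R f)) (Ne.symm hn)
      have hoscpos : 0 < oscNorm μ (R f) := by
        rw [pos_iff_ne_zero]
        intro h0
        have hz := WPIaux.eq_zero_of_osc_zero (R f) h0 hint0
        rw [hz] at hn
        apply hn
        simp [dirichletForm]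
      have hosclt : oscNorm μ (R f) < ⊤ := lt_of_le_of_lt (WPIaux.markov_osc_le hR f) hlt
      have hw := hComp (R f) hint0 hoscpos hosclt
      exact WPIaux.key_arith Ks hKsmono hnpos
        (ENNReal.toReal_pos hoscpos.ne' hosclt.ne)
        (ENNReal.toReal_mono hlt.ne (WPIaux.markov_osc_le hR f)) hw


end
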